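/- Let k be a field of characteristic zero, let R be a finitely generated commutative k-algebra, and let δ be a k-linear derivation of R. If P is a maximal ideal of R with δ(P) ⊆ P, then δ(y) ∈ P for every y ∈ R; that is, every δ-invariant maximal ideal of R contains δ(R). -/

import Mathlib

/-- Let `k` be a field of characteristic zero, `R` a finitely generated commutative
`k`-algebra, and `δ` a `k`-linear derivation of `R`.  If `P` is a `δ`-invariant
maximal ideal of `R`, then `δ(y) ∈ P` for every `y ∈ R`. -/
theorem derivation_mem_of_invariant_maximal_ideal
    (k R : Type*) [Field k] [CharZero k] [CommRing R] [Algebra k R]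
    [Algebra.FiniteType k R]
    (δ : Derivation k R R)
    (P : Ideal R) (hP : P.IsMaximal) (hPinv : ∀ x ∈ P, δ x ∈ P) :
    ∀ y : R, δ y ∈ P := by
  intro y
  letI : Field (R ⧸ P) := Ideal.Quotient.field P
  haveI : Algebra.FiniteType k (R ⧸ P) :=
    Algebra.FiniteType.of_surjective
      (Ideal.Quotient.mkₐ k P) (Ideal.Quotient.mkₐ_surjective k P)
  haveI : Module.Finite k (R ⧸ P) := finite_of_finite_type_of_isJacobsonRing k (R ⧸ P)
  set φ : R →ₐ[k] R ⧸ P := Ideal.Quotient.mkₐ k P with hφ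
  have hint : IsIntegral k (φ y) := Algebra.IsIntegral.isIntegral _
  set p := minpoly k (φ y) with hpdef
  have hp0 : Polynomial.aeval (φ y) p = 0 := minpoly.aeval k (φ y)
  have h1 : Polynomial.aeval y p ∈ P := by
    rw [← Ideal.Quotient.eq_zero_iff_mem]
    have : Ideal.Quotient.mk P (Polynomial.aeval y p) = Polynomial.aeval (φ y) p := by
      simpa [hφ] using (Polynomial.aeval_algHom_apply φ y p).symm
    rw [this, hp0]
  have h2 : δ (Polynomial.aeval y p) ∈ P := hPinv _ h1
  rw [Derivation.comp_aeval_eq] at h2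
  have h3 : φ (Polynomial.aeval y (Polynomial.derivative p) * δ y) = 0 := by
    simpa [smul_eq_mul, hφ] using (Ideal.Quotient.eq_zero_iff_mem).2 h2
  have h4 : Polynomial.aeval (φ y) (Polynomial.derivative p) * φ (δ y) = 0 := by
    rw [← h3, map_mul]
    congr 1
    exact Polynomial.aeval_algHom_apply φ y (Polynomial.derivative p)
  have hsep : p.Separable := PerfectField.separable_of_irreducible (minpoly.irreducible hint)
  have h5 : Polynomial.aeval (φ y) (Polynomial.derivative p) ≠ 0 :=
    hsep.aeval_derivative_ne_zero hp0
  have h6 : φ (δ y) = 0 := by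
    rcases mul_eq_zero.mp h4 with h | h
    · exact absurd h h5
    · exact h
  rwa [← Ideal.Quotient.eq_zero_iff_mem]
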